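/- Let a < b be real numbers, let κₙ, κ : [a,b] → ℝ be continuous functions (n ∈ ℕ) with κₙ → κ uniformly on [a,b]. Let uₙ and u be the solutions on [a,b] of w'' + κₙw = 0 and w'' + κw = 0 respectively, each with w(a) = 0 and w'(a) = 1. Then uₙ → u uniformly on [a,b], and uₙ' → u' uniformly on [a,b]. (Stability of solutions of the Sturm–Liouville equation under uniform convergence of the coefficient.) -/

import Mathlib

open Set

/-- `u` is a (twice continuously differentiable) solution of `u'' + κ·u = 0` on the set `s`,
with first and second derivative functions `u'` and `u''`. -/
def SturmSol (κ u u' u'' : ℝ → ℝ) (s : Set ℝ) : Prop :=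
  (∀ t ∈ s, HasDerivWithinAt u (u' t) s t) ∧
  (∀ t ∈ s, HasDerivWithinAt u' (u'' t) s t) ∧
  ContinuousOn u'' s ∧
  (∀ t ∈ s, u'' t + κ t * u t = 0)

/-- Stability of solutions of the Sturm–Liouville equation under uniform
convergence of the coefficient. -/
theorem sturm_stability
    (a b : ℝ) (hab : a < b)
    (κn : ℕ → ℝ → ℝ) (κ : ℝ → ℝ)
    (hκn : ∀ n, ContinuousOn (κn n) (Icc a b)) (hκ : ContinuousOn κ (Icc a b))
    (hconv : TendstoUniformlyOn κn κ Filter.atTop (Icc a b))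
    (un un' un'' : ℕ → ℝ → ℝ) (u u' u'' : ℝ → ℝ)
    (hun : ∀ n, SturmSol (κn n) (un n) (un' n) (un'' n) (Icc a b))
    (hu : SturmSol κ u u' u'' (Icc a b))
    (huna : ∀ n, un n a = 0) (hun'a : ∀ n, un' n a = 1)
    (hua : u a = 0) (hu'a : u' a = 1) :
    TendstoUniformlyOn un u Filter.atTop (Icc a b) ∧
      TendstoUniformlyOn un' u' Filter.atTop (Icc a b) := by
  obtain ⟨hud, hu'd, _, hueq⟩ := hu
  have hucont : ContinuousOn u (Icc a b) := fun t ht => (hud t ht).continuousWithinAt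
  obtain ⟨M0, hM0⟩ := isCompact_Icc.exists_bound_of_continuousOn hucont
  have hM0' : 0 ≤ M0 := le_trans (norm_nonneg _) (hM0 a (left_mem_Icc.2 hab.le))
  set M : ℝ := M0 + 1 with hMdef
  have hMpos : 0 < M := by linarith
  have hM : ∀ t ∈ Icc a b, |u t| ≤ M := fun t ht => le_trans (hM0 t ht) (by linarith)
  obtain ⟨K0, hK0⟩ := isCompact_Icc.exists_bound_of_continuousOn hκ
  have hK0' : 0 ≤ K0 := le_trans (norm_nonneg _) (hK0 a (left_mem_Icc.2 hab.le))
  set K : ℝ := K0 + 1 with hKdef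
  have hK1 : (1:ℝ) ≤ K := by linarith
  have hKpos : (0:ℝ) < K := by linarith
  set E : ℝ := Real.exp (K * (b - a)) with hEdef
  have hEpos : 0 < E := Real.exp_pos _
  -- master claim
  have key : ∀ η > (0:ℝ), ∀ᶠ n in Filter.atTop, ∀ t ∈ Icc a b,
      ‖(un n t - u t, un' n t - u' t)‖ < η := by
    intro η hη
    set ε₀ : ℝ := min 1 (η * K / (2 * M * E)) with hε₀def
    have hε₀pos : 0 < ε₀ :=
      lt_min one_pos (by positivity)
    have hε₀le1 : ε₀ ≤ 1 := min_le_left _ _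
    have hε₀le : ε₀ ≤ η * K / (2 * M * E) := min_le_right _ _
    filter_upwards [Metric.tendstoUniformlyOn_iff.1 hconv ε₀ hε₀pos] with n hn
    obtain ⟨hd1, hd2, _, heqn⟩ := hun n
    set f : ℝ → ℝ × ℝ := fun t => (un n t - u t, un' n t - u' t) with hfdef
    set g : ℝ → ℝ × ℝ := fun t => (un' n t - u' t, un'' n t - u'' t) with hgdef
    have hcont : ContinuousOn f (Icc a b) :=
      ContinuousOn.prodMk
        (fun t ht => ((hd1 t ht).sub (hud t ht)).continuousWithinAt)
        (fun t ht => ((hd2 t ht).sub (hu'd t ht)).continuousWithinAt)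
    have hderiv : ∀ x ∈ Ico a b, HasDerivWithinAt f (g x) (Ici x) x := by
      intro x hx
      have hmem : Icc a b ∈ nhdsWithin x (Ici x) := by
        apply mem_nhdsWithin.2 ⟨Iio b, isOpen_Iio, hx.2, ?_⟩
        rintro y ⟨hy1, hy2⟩
        exact ⟨le_trans hx.1 hy2, le_of_lt hy1⟩
      have hxm : x ∈ Icc a b := ⟨hx.1, hx.2.le⟩
      exact (((hd1 x hxm).sub (hud x hxm)).prodMk
        ((hd2 x hxm).sub (hu'd x hxm))).mono_of_mem_nhdsWithin hmem
    have ha0 : ‖f a‖ ≤ 0 := by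
      simp [hfdef, huna, hua, hun'a, hu'a, Prod.norm_def]
    have hbound : ∀ x ∈ Ico a b, ‖g x‖ ≤ K * ‖f x‖ + ε₀ * M := by
      intro x hx
      have hxm : x ∈ Icc a b := ⟨hx.1, hx.2.le⟩
      have hκnb : |κn n x| ≤ K := by
        have h1 : |κ x - κn n x| < ε₀ := by
          have := hn x hxm; rwa [Real.dist_eq] at this
        have h2 : |κ x| ≤ K0 := hK0 x hxm
        calc |κn n x| = |κ x - (κ x - κn n x)| := by ring_nf
          _ ≤ |κ x| + |κ x - κn n x| := abs_sub _ _
          _ ≤ K := by rw [hKdef]; linarith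
      have hfst : |un n x - u x| ≤ ‖f x‖ := norm_fst_le (f x)
      have hsnd : |un' n x - u' x| ≤ ‖f x‖ := norm_snd_le (f x)
      have hεM : 0 ≤ ε₀ * M := by positivity
      have hc2 : |un'' n x - u'' x| ≤ K * ‖f x‖ + ε₀ * M := by
        have he : un'' n x - u'' x
            = -(κn n x) * (un n x - u x) + (κ x - κn n x) * u x := by
          linear_combination heqn x hxm - hueq x hxm
        have h1 : |κ x - κn n x| ≤ ε₀ :=
          le_of_lt (by have := hn x hxm; rwa [Real.dist_eq] at this)
        calc |un'' n x - u'' x|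
            ≤ |κn n x| * |un n x - u x| + |κ x - κn n x| * |u x| := by
              rw [he]
              refine le_trans (abs_add_le _ _) ?_
              rw [abs_mul, abs_mul, abs_neg]
          _ ≤ K * ‖f x‖ + ε₀ * M := by
              have := hM x hxm
              have h0 : (0:ℝ) ≤ |un n x - u x| := abs_nonneg _
              have h0' : (0:ℝ) ≤ |u x| := abs_nonneg _
              have h0'' : (0:ℝ) ≤ |κ x - κn n x| := abs_nonneg _
              nlinarith [abs_nonneg (κn n x)]
      have hc1 : |un' n x - u' x| ≤ K * ‖f x‖ + ε₀ * M := by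
        nlinarith [norm_nonneg (f x)]
      calc ‖g x‖ = max |un' n x - u' x| |un'' n x - u'' x| := by
            simp [hgdef, Prod.norm_def, Real.norm_eq_abs]
        _ ≤ K * ‖f x‖ + ε₀ * M := max_le hc1 hc2
    have hgron := norm_le_gronwallBound_of_norm_deriv_right_le hcont hderiv ha0 hbound
    intro t ht
    have hb := hgron t ht
    rw [gronwallBound_of_K_ne_0 hKpos.ne'] at hb
    simp only [zero_mul, zero_add] at hb
    have hexp : Real.exp (K * (t - a)) - 1 ≤ E := by
      have : K * (t - a) ≤ K * (b - a) :=
        mul_le_mul_of_nonneg_left (by linarith [ht.2]) hKpos.le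
      have := Real.exp_le_exp.2 this
      rw [hEdef]; linarith
    have hstep : ε₀ * M / K * (Real.exp (K * (t - a)) - 1) ≤ ε₀ * M / K * E :=
      mul_le_mul_of_nonneg_left hexp (by positivity)
    have hfinal : ε₀ * M / K * E ≤ η / 2 := by
      rw [div_mul_eq_mul_div, div_le_div_iff₀ hKpos (by norm_num : (0:ℝ) < 2)]
      have h2 : ε₀ * (2 * M * E) ≤ η * K := by
        rw [hε₀def]
        calc min 1 (η * K / (2 * M * E)) * (2 * M * E)
            ≤ η * K / (2 * M * E) * (2 * M * E) :=
              mul_le_mul_of_nonneg_right (min_le_right _ _) (by positivity)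
          _ = η * K := by field_simp
      nlinarith
    calc ‖f t‖ ≤ ε₀ * M / K * (Real.exp (K * (t - a)) - 1) := hb
      _ ≤ η / 2 := le_trans hstep hfinal
      _ < η := by linarith
  constructor
  · rw [Metric.tendstoUniformlyOn_iff]
    intro η hη
    filter_upwards [key η hη] with n hn t ht
    have h1 : |un n t - u t| ≤ ‖(un n t - u t, un' n t - u' t)‖ :=
      by simpa using norm_fst_le ((un n t - u t, un' n t - u' t) : ℝ × ℝ)
    rw [Real.dist_eq, abs_sub_comm]
    exact lt_of_le_of_lt h1 (hn t ht)
  · rw [Metric.tendstoUniformlyOn_iff]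
    intro η hη
    filter_upwards [key η hη] with n hn t ht
    have h1 : |un' n t - u' t| ≤ ‖(un n t - u t, un' n t - u' t)‖ :=
      by simpa using norm_snd_le ((un n t - u t, un' n t - u' t) : ℝ × ℝ)
    rw [Real.dist_eq, abs_sub_comm]
    exact lt_of_le_of_lt h1 (hn t ht)
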